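/- Let T be a tree and f a condensation of T. Then f is an automorphism of T if and only if ht(t) = ht(f(t)) for every t ∈ T. -/
import Mathlib


/- A tree is a partial order in which the set of strict predecessors of every
element is well-ordered. Basic vocabulary: condensations, automorphisms,
reversibility, heights, levels, nodes, upward closures, branches. -/

universe u v

/- The height of an element `t`: the order type of the set `(·,t)` of its strict
predecessors (which is well-ordered when the order is a tree). -/
open Classical in
noncomputable def treeHt {T : Type u} [PartialOrder T] (t : T) : Ordinal.{u} :=
  if h : IsWellOrder {s : T // s < t} (fun a b => (a : T) < (b : T)) then
    @Ordinal.type {s : T // s < t} (fun a b => (a : T) < (b : T)) h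
  else 0

/-- A partial order is a tree iff every set `(·,t)` is well-ordered by `<`. -/
def IsTree (T : Type u) [PartialOrder T] : Prop :=
  ∀ t : T, IsWellOrder {s : T // s < t} (fun a b => (a : T) < (b : T))

/-- A condensation: a bijective endomorphism. -/
def IsCond {T : Type u} [PartialOrder T] (f : T → T) : Prop :=
  Function.Bijective f ∧ ∀ s t : T, s < t → f s < f t

/-- An automorphism: a bijection preserving and reflecting `<`. -/
def IsAuto {T : Type u} [PartialOrder T] (f : T → T) : Prop :=
  Function.Bijective f ∧ ∀ s t : T, s < t ↔ f s < f t

/-- A structure is reversible iff every condensation is an automorphism. -/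
def Reversible (T : Type u) [PartialOrder T] : Prop :=
  ∀ f : T → T, IsCond f → IsAuto f

/-- The `α`-th level: elements of height `α`. -/
def level (T : Type u) [PartialOrder T] (α : Ordinal.{u}) : Set T :=
  {t : T | treeHt t = α}

/-- The height of the tree: the least ordinal `α` with `L_α = ∅`. -/
noncomputable def treeHeight (T : Type u) [PartialOrder T] : Ordinal.{u} :=
  sInf {α : Ordinal.{u} | level T α = ∅}

/-- Nodes: equivalence classes of the relation `s ∼ t` iff `(·,s) = (·,t)`. -/
def IsNode {T : Type u} [PartialOrder T] (N : Set T) : Prop :=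
  ∃ t : T, N = {s : T | Set.Iio s = Set.Iio t}

/-- `S↑`, the upward closure of `S`. -/
def upClo {T : Type u} [PartialOrder T] (S : Set T) : Set T :=
  {t : T | ∃ s ∈ S, s ≤ t}

/-- A branch: a maximal chain. -/
def IsBranch {T : Type u} [PartialOrder T] (b : Set T) : Prop :=
  IsMaxChain (· ≤ ·) b

/- The height (order type) of a chain (junk value `0` if not well-ordered;
in a tree every chain is well-ordered). -/
open Classical in
noncomputable def chainHt {T : Type u} [PartialOrder T] (b : Set T) : Ordinal.{u} :=
  if h : IsWellOrder b (fun x y : b => (x : T) < (y : T)) then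
    @Ordinal.type b (fun x y : b => (x : T) < (y : T)) h
  else 0


section aux
variable {T : Type u} [PartialOrder T]

lemma treeHt_eq' (hT : IsTree T) (t : T) :
    treeHt t = @Ordinal.type {s : T // s < t} (fun a b => (a : T) < (b : T)) (hT t) :=
  dif_pos (hT t)

lemma treeHt_eq_typein (hT : IsTree T) {t s : T} (h : s < t) :
    treeHt s = @Ordinal.typein {x : T // x < t} (fun a b => (a : T) < (b : T)) (hT t) ⟨s, h⟩ := by
  haveI := hT t
  rw [treeHt_eq' hT s, ← Ordinal.type_subrel]
  haveI := hT s
  refine Ordinal.type_eq.2 ⟨⟨Equiv.mk (fun x => ⟨⟨x, lt_trans x.2 h⟩, x.2⟩)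
    (fun y => ⟨y.1.1, y.2⟩) (fun x => rfl) (fun y => rfl), Iff.rfl⟩⟩

lemma treeHt_lt (hT : IsTree T) {s t : T} (h : s < t) : treeHt s < treeHt t := by
  haveI := hT t
  rw [treeHt_eq_typein hT h, treeHt_eq' hT t]
  exact Ordinal.typein_lt_type _ _

lemma exists_lt_of_lt_treeHt (hT : IsTree T) {t : T} {α : Ordinal.{u}}
    (h : α < treeHt t) : ∃ s : T, s < t ∧ treeHt s = α := by
  haveI := hT t
  rw [treeHt_eq' hT t] at h
  obtain ⟨⟨s, hs⟩, hst⟩ := Ordinal.typein_surj _ h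
  exact ⟨s, hs, (treeHt_eq_typein hT hs).trans hst⟩

end aux

/-- Let `T` be a tree and `f` a condensation of `T`. Then `f` is an
automorphism of `T` iff `ht(t) = ht(f(t))` for every `t ∈ T`. -/
theorem stmt0 {T : Type u} [PartialOrder T] (hT : IsTree T)
    (f : T → T) (hf : IsCond f) :
    IsAuto f ↔ ∀ t : T, treeHt t = treeHt (f t) := by
  constructor
  · intro hA t
    haveI := hT t
    haveI := hT (f t)
    rw [treeHt_eq' hT t, treeHt_eq' hT (f t)]
    refine Ordinal.type_eq.2 ⟨⟨Equiv.subtypeEquiv (Equiv.ofBijective f hA.1)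
      (fun s => hA.2 s t), ?_⟩⟩
    intro a b
    exact (hA.2 (a : T) (b : T)).symm
  · intro hht
    refine ⟨hf.1, fun s t => ⟨hf.2 s t, fun hfs => ?_⟩⟩
    have h1 : treeHt s < treeHt t := by
      rw [hht s, hht t]; exact treeHt_lt hT hfs
    obtain ⟨s', hs't, hs'⟩ := exists_lt_of_lt_treeHt hT h1
    have hfs' : f s' < f t := hf.2 _ _ hs't
    have heq : treeHt (f s') = treeHt (f s) := by
      rw [← hht s', ← hht s, hs']
    have : f s' = f s := by
      haveI := hT (f t)
      rcases trichotomous_of (fun a b : {x : T // x < f t} => (a : T) < (b : T))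
        ⟨f s', hfs'⟩ ⟨f s, hfs⟩ with h | h | h
      rotate_left
      · exact congrArg Subtype.val h
      · exact absurd (treeHt_lt hT h) (by rw [heq]; exact lt_irrefl _)
      · exact absurd (treeHt_lt hT h) (by rw [heq]; exact lt_irrefl _)
    rwa [← hf.1.1 this]
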